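/- With δ-best responses: for profiles x, x', ε ∈ [0,1], and any player i, max_k (u_i^s((1−ε)x + εx'))_k ≤ (1−ε)·max_{k ∈ Br_i^δ(x)}(u_i^s(x))_k + ε·max_{k ∈ Br_i^δ(x)}(u_i^s(x'))_k + Λ_i^δ(x, x', ε), where Λ_i^δ(x, x', ε) = max{0, max_{k ∉ Br_i^δ(x)}(u_i^s(x̄))_k − max_{l ∈ Br_i^δ(x)}(u_i^s(x̄))_l} and x̄ = (1−ε)x + εx'. -/

import Mathlib

open Finset
open scoped Classical

noncomputable section

/-- maximum of `v` over a finset `S` (junk value `0` if `S` is empty). -/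
noncomputable def fmaxOn {α : Type*} (S : Finset α) (v : α → ℝ) : ℝ :=
  if h : S.Nonempty then S.sup' h v else 0

/-- minimum of `v` over a finset `S` (junk value `0` if `S` is empty). -/
noncomputable def fminOn {α : Type*} (S : Finset α) (v : α → ℝ) : ℝ :=
  if h : S.Nonempty then S.inf' h v else 0

section Polymatrix

variable {n : ℕ} (m : Fin n → ℕ) (N : Fin n → Finset (Fin n))
  (A : ∀ i j : Fin n, Matrix (Fin (m i)) (Fin (m j)) ℝ)

/-- vector of pure-strategy payoffs of player `i` against profile `x`:
`u_i^s(x) = Σ_{j ∈ N(i)} A_ij x_j`. -/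
def usVec (i : Fin n) (x : ∀ j, Fin (m j) → ℝ) : Fin (m i) → ℝ :=
  fun k => ∑ j ∈ N i, ∑ q, A i j k q * x j q

/-- payoff to player `i` from playing the (possibly formal) strategy `y`
against profile `x`: `u_i(y, x) = yᵀ u_i^s(x)`. -/
def payTo (i : Fin n) (y : Fin (m i) → ℝ) (x : ∀ j, Fin (m j) → ℝ) : ℝ :=
  ∑ k, y k * usVec m N A i x k

/-- payoff of player `i` under profile `x`. -/
def payoff (i : Fin n) (x : ∀ j, Fin (m j) → ℝ) : ℝ := payTo m N A i (x i) x

/-- best-response payoff of player `i` against `x`. -/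
def brp (i : Fin n) (x : ∀ j, Fin (m j) → ℝ) : ℝ := fmaxOn univ (usVec m N A i x)

/-- pure best responses of player `i` against `x`. -/
def brSet (i : Fin n) (x : ∀ j, Fin (m j) → ℝ) : Finset (Fin (m i)) :=
  univ.filter fun k => ∀ l, usVec m N A i x l ≤ usVec m N A i x k

/-- `δ`-best responses of player `i` against `x`. -/
def brdSet (δ : ℝ) (i : Fin n) (x : ∀ j, Fin (m j) → ℝ) : Finset (Fin (m i)) :=
  univ.filter fun k => brp m N A i x - δ ≤ usVec m N A i x k

/-- regret of player `i` under `x`: `f_i(x)`. -/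
def regret (i : Fin n) (x : ∀ j, Fin (m j) → ℝ) : ℝ :=
  brp m N A i x - payoff m N A i x

/-- maximum regret `f(x) = max_i f_i(x)`. -/
def maxRegret (x : ∀ j, Fin (m j) → ℝ) : ℝ := fmaxOn univ fun i => regret m N A i x

/-- set of players with maximum regret `K(x)`. -/
def Kset (x : ∀ j, Fin (m j) → ℝ) : Finset (Fin n) :=
  univ.filter fun i => regret m N A i x = maxRegret m N A x

/-- `Df_i^δ(x, x')`. -/
def Dfd (δ : ℝ) (i : Fin n) (x x' : ∀ j, Fin (m j) → ℝ) : ℝ :=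
  fmaxOn (brdSet m N A δ i x) (usVec m N A i x')
    - payTo m N A i (x i) x' - payTo m N A i (x' i) x + payTo m N A i (x i) x

/-- `Df^δ(x, x') = max_{i ∈ K(x)} Df_i^δ(x, x') - f(x)`. -/
def DfdAll (δ : ℝ) (x x' : ∀ j, Fin (m j) → ℝ) : ℝ :=
  fmaxOn (Kset m N A x) (fun i => Dfd m N A δ i x x') - maxRegret m N A x

/-- `Df_i(x, x')` (with exact best responses). -/
def Dfbr (i : Fin n) (x x' : ∀ j, Fin (m j) → ℝ) : ℝ :=
  fmaxOn (brSet m N A i x) (usVec m N A i x')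
    - payTo m N A i (x i) x' - payTo m N A i (x' i) x + payTo m N A i (x i) x

/-- the profile `(1-ε)x + εx'`. -/
def mix (x x' : ∀ j, Fin (m j) → ℝ) (ε : ℝ) : ∀ j, Fin (m j) → ℝ :=
  fun j => (1 - ε) • x j + ε • x' j

/-- `Λ_i^δ(x, x', ε)`; if the complement of the `δ`-best-response set is empty
the inner maximum is `-∞`, i.e. `Λ_i^δ = 0`. -/
def Lamd (δ : ℝ) (i : Fin n) (x x' : ∀ j, Fin (m j) → ℝ) (ε : ℝ) : ℝ :=
  if _h : ((brdSet m N A δ i x)ᶜ).Nonempty then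
    max 0 (fmaxOn (brdSet m N A δ i x)ᶜ (usVec m N A i (mix m x x' ε))
         - fmaxOn (brdSet m N A δ i x) (usVec m N A i (mix m x x' ε)))
  else 0

/-- `Λ_i(x, x', ε)` (with exact best responses). -/
def LamBr (i : Fin n) (x x' : ∀ j, Fin (m j) → ℝ) (ε : ℝ) : ℝ :=
  if _h : ((brSet m N A i x)ᶜ).Nonempty then
    max 0 (fmaxOn (brSet m N A i x)ᶜ (usVec m N A i (mix m x x' ε))
         - fmaxOn (brSet m N A i x) (usVec m N A i (mix m x x' ε)))
  else 0

/-- `x` is a mixed strategy profile. -/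
def isProfile (x : ∀ j, Fin (m j) → ℝ) : Prop :=
  ∀ j, x j ∈ stdSimplex ℝ (Fin (m j))

/-- the game is normalized: all pure-strategy payoffs of every player lie in
`[0,1]` against every mixed profile. -/
def normalized : Prop :=
  ∀ i (x : ∀ j, Fin (m j) → ℝ), isProfile m x →
    ∀ k, usVec m N A i x k ∈ Set.Icc (0:ℝ) 1


lemma maxOn_le' {α : Type*} {S : Finset α} (h : S.Nonempty) {v : α → ℝ} {c : ℝ}
    (H : ∀ k ∈ S, v k ≤ c) : fmaxOn S v ≤ c := by
  rw [fmaxOn, dif_pos h]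
  exact Finset.sup'_le h v H

lemma le_maxOn' {α : Type*} {S : Finset α} {v : α → ℝ} {k : α} (hk : k ∈ S) :
    v k ≤ fmaxOn S v := by
  rw [fmaxOn, dif_pos ⟨k, hk⟩]
  exact Finset.le_sup' v hk

lemma usVec_mix {n : ℕ} (m : Fin n → ℕ) (N : Fin n → Finset (Fin n))
    (A : ∀ i j : Fin n, Matrix (Fin (m i)) (Fin (m j)) ℝ) (i : Fin n)
    (x x' : ∀ j, Fin (m j) → ℝ) (ε : ℝ) (k : Fin (m i)) :
    usVec m N A i (mix m x x' ε) k
      = (1 - ε) * usVec m N A i x k + ε * usVec m N A i x' k := by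
  simp only [usVec, mix, Pi.add_apply, Pi.smul_apply, smul_eq_mul, Finset.mul_sum,
    ← Finset.sum_add_distrib]
  exact Finset.sum_congr rfl fun j _ => Finset.sum_congr rfl fun q _ => by ring

/-- the `δ`-best-response version of the splitting lemma, as an
inequality. -/
theorem stmt5 (hm : ∀ i, 0 < m i) (δ : ℝ) (hδ : 0 ≤ δ) (i : Fin n)
    (x x' : ∀ j, Fin (m j) → ℝ) (ε : ℝ) (hε : ε ∈ Set.Icc (0:ℝ) 1) :
    brp m N A i (mix m x x' ε)
      ≤ (1 - ε) * fmaxOn (brdSet m N A δ i x) (usVec m N A i x)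
        + ε * fmaxOn (brdSet m N A δ i x) (usVec m N A i x')
        + Lamd m N A δ i x x' ε := by
  obtain ⟨hε0, hε1⟩ := hε
  have h1ε : 0 ≤ 1 - ε := by linarith
  set v := usVec m N A i x with hv
  set v' := usVec m N A i x' with hv'
  set vb := usVec m N A i (mix m x x' ε) with hvb
  set S := brdSet m N A δ i x with hSdef
  have hU : (univ : Finset (Fin (m i))).Nonempty := by
    have : Nonempty (Fin (m i)) := ⟨⟨0, hm i⟩⟩
    exact univ_nonempty
  -- S nonempty
  have hS : S.Nonempty := by
    obtain ⟨k, _, hk⟩ := Finset.exists_max_image univ v hU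
    refine ⟨k, ?_⟩
    rw [hSdef, brdSet, Finset.mem_filter]
    refine ⟨Finset.mem_univ k, ?_⟩
    have : brp m N A i x ≤ v k := maxOn_le' hU fun l _ => hk l (Finset.mem_univ l)
    linarith
  have hmixS : fmaxOn S vb ≤ (1 - ε) * fmaxOn S v + ε * fmaxOn S v' := by
    refine maxOn_le' hS fun k hk => ?_
    rw [hvb, usVec_mix]
    have h1 : v k ≤ fmaxOn S v := le_maxOn' hk
    have h2 : v' k ≤ fmaxOn S v' := le_maxOn' hk
    nlinarith
  have hLam0 : 0 ≤ Lamd m N A δ i x x' ε := by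
    rw [Lamd]; split <;> simp
  rw [brp]
  refine maxOn_le' hU fun k _ => ?_
  by_cases hkS : k ∈ S
  · have : vb k ≤ (1 - ε) * fmaxOn S v + ε * fmaxOn S v' := by
      rw [hvb, usVec_mix]
      have h1 : v k ≤ fmaxOn S v := le_maxOn' hkS
      have h2 : v' k ≤ fmaxOn S v' := le_maxOn' hkS
      nlinarith
    linarith
  · have hkc : k ∈ Sᶜ := Finset.mem_compl.mpr hkS
    have hScne : (Sᶜ : Finset (Fin (m i))).Nonempty := ⟨k, hkc⟩
    have hLam : fmaxOn Sᶜ vb - fmaxOn S vb ≤ Lamd m N A δ i x x' ε := by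
      rw [Lamd, dif_pos hScne]
      exact le_max_right _ _
    have h1 : vb k ≤ fmaxOn Sᶜ vb := le_maxOn' hkc
    linarith

end Polymatrix
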